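/- Let P be a nonzero n-variate polynomial of total degree d over a finite field F, and let r₁,...,rₙ be chosen independently and uniformly at random from F. Then the probability that P(r₁,...,rₙ) = 0 is at most d/|F|. -/

import Mathlib

open scoped Classical

open Finset MvPolynomial

lemma sz_univariate {F : Type*} [Field F] [Fintype F] (q : Polynomial F) (hq : q ≠ 0) :
    (univ.filter fun y : F => q.eval y = 0).card ≤ q.natDegree := by
  classical
  calc (univ.filter fun y : F => q.eval y = 0).card
      ≤ q.roots.toFinset.card := by
        apply Finset.card_le_card
        intro y hy
        simp only [mem_filter] at hy
        simp [Multiset.mem_toFinset, Polynomial.mem_roots, hq, hy.2, Polynomial.IsRoot]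
    _ ≤ Multiset.card q.roots := q.roots.toFinset_card_le
    _ ≤ q.natDegree := q.card_roots'

lemma sz_count {F : Type*} [Field F] [Fintype F] :
    ∀ (n : ℕ) (P : MvPolynomial (Fin n) F), P ≠ 0 →
    (univ.filter fun r : Fin n → F => eval r P = 0).card * Fintype.card F
      ≤ P.totalDegree * (Fintype.card F) ^ n := by
  classical
  intro n
  induction n with
  | zero =>
    intro P hP
    obtain ⟨c, rfl⟩ := MvPolynomial.C_surjective (Fin 0) P
    have hc : c ≠ 0 := fun h => hP (by simp [h])
    have : (univ.filter fun r : Fin 0 → F => eval r (C c) = 0) = ∅ := by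
      apply Finset.filter_false_of_mem
      intro r _
      simpa using hc
    simp [this, hc]
  | succ n ih =>
    intro P hP
    set q : Polynomial (MvPolynomial (Fin n) F) := finSuccEquiv F n P with hq
    have hq0 : q ≠ 0 := by
      simp [hq, hP]
    set k := q.natDegree with hk
    set Pk : MvPolynomial (Fin n) F := q.coeff k with hPk
    have hPk0 : Pk ≠ 0 := Polynomial.leadingCoeff_ne_zero.mpr hq0
    have hdeg : Pk.totalDegree + k ≤ P.totalDegree :=
      MvPolynomial.totalDegree_coeff_finSuccEquiv_add_le P k hPk0
    set A : Finset (Fin n → F) := univ.filter fun s => eval s Pk = 0 with hA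
    -- for each tail s, count the heads y making P vanish
    have fiber_bound : ∀ s : Fin n → F, s ∉ A →
        (univ.filter fun y : F => eval (Fin.cons y s : Fin (n+1) → F) P = 0).card ≤ k := by
      intro s hs
      have hsPk : eval s Pk ≠ 0 := by
        simp only [hA, mem_filter, mem_univ, true_and] at hs
        exact hs
      set qs : Polynomial F := q.map (eval s) with hqs
      have hcoeff : qs.coeff k = eval s Pk := by simp [hqs, Polynomial.coeff_map, hPk]
      have hqs0 : qs ≠ 0 := fun h => hsPk (by rw [← hcoeff, h, Polynomial.coeff_zero])
      have hdegqs : qs.natDegree ≤ k := Polynomial.natDegree_map_le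
      have heval : ∀ y : F, eval (Fin.cons y s : Fin (n+1) → F) P = qs.eval y := by
        intro y; rw [MvPolynomial.eval_eq_eval_mv_eval']
      calc (univ.filter fun y : F => eval (Fin.cons y s : Fin (n+1) → F) P = 0).card
          = (univ.filter fun y : F => qs.eval y = 0).card := by
            congr 1; ext y; simp [heval]
        _ ≤ qs.natDegree := sz_univariate qs hqs0
        _ ≤ k := hdegqs
    -- decompose the zero set of P fiberwise over tails
    have key : (univ.filter fun r : Fin (n+1) → F => eval r P = 0).card
        ≤ A.card * Fintype.card F + (Fintype.card F) ^ n * k := by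
      have hbij : (univ.filter fun r : Fin (n+1) → F => eval r P = 0).card
          = (univ.filter fun p : F × (Fin n → F) =>
              eval (Fin.cons p.1 p.2 : Fin (n+1) → F) P = 0).card := by
        apply Finset.card_nbij' (fun r => (r 0, Fin.tail r)) (fun p => Fin.cons p.1 p.2)
        · intro r hr
          simp only [mem_coe, mem_filter, mem_univ, true_and] at hr ⊢
          rw [Fin.cons_self_tail]; exact hr
        · intro p hp
          simp only [mem_coe, mem_filter, mem_univ, true_and] at hp ⊢
          exact hp
        · intro r _; simp [Fin.cons_self_tail]
        · intro p _; simp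
      rw [hbij]
      rw [Finset.card_eq_sum_card_fiberwise (f := Prod.snd) (t := univ) (fun x _ => mem_univ _)]
      have fibcard : ∀ s : Fin n → F,
          ((univ.filter fun p : F × (Fin n → F) =>
              eval (Fin.cons p.1 p.2 : Fin (n+1) → F) P = 0).filter fun p => p.2 = s).card
          = (univ.filter fun y : F => eval (Fin.cons y s : Fin (n+1) → F) P = 0).card := by
        intro s
        apply Finset.card_nbij' (fun p => p.1) (fun y => (y, s))
        · intro p hp
          simp only [mem_coe, mem_filter, mem_univ, true_and] at hp ⊢
          rw [← hp.2]; exact hp.1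
        · intro y hy
          simp only [mem_coe, mem_filter, mem_univ, true_and] at hy
          refine mem_filter.mpr ⟨mem_filter.mpr ⟨mem_univ _, hy⟩, rfl⟩
        · intro p hp
          have h2 : p.2 = s := (mem_filter.mp hp).2
          show (p.1, s) = p
          rw [← h2]
        · intro y _; rfl
      calc ∑ s : Fin n → F, ((univ.filter fun p : F × (Fin n → F) =>
              eval (Fin.cons p.1 p.2 : Fin (n+1) → F) P = 0).filter fun p => p.2 = s).card
          = ∑ s : Fin n → F,
              (univ.filter fun y : F => eval (Fin.cons y s : Fin (n+1) → F) P = 0).card := by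
            exact Finset.sum_congr rfl fun s _ => fibcard s
        _ = ∑ s ∈ A, (univ.filter fun y : F => eval (Fin.cons y s : Fin (n+1) → F) P = 0).card
            + ∑ s ∈ univ.filter (· ∉ A),
                (univ.filter fun y : F => eval (Fin.cons y s : Fin (n+1) → F) P = 0).card := by
            rw [← Finset.sum_filter_add_sum_filter_not univ (· ∈ A)]
            congr 1
            apply Finset.sum_congr _ fun _ _ => rfl
            ext s; simp
        _ ≤ ∑ _s ∈ A, Fintype.card F + ∑ _s ∈ univ.filter (· ∉ A), k := by
            gcongr with s hs s hs
            · exact (Finset.card_filter_le _ _).trans (by simp)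
            · exact fiber_bound s (by simpa using (mem_filter.mp hs).2)
        _ ≤ A.card * Fintype.card F + (Fintype.card F) ^ n * k := by
            simp only [Finset.sum_const, smul_eq_mul]
            gcongr
            calc (univ.filter (· ∉ A)).card ≤ (univ : Finset (Fin n → F)).card :=
                  Finset.card_filter_le _ _
              _ = (Fintype.card F) ^ n := by simp [Fintype.card_fun]
    -- combine with IH applied to Pk
    have ihPk := ih Pk hPk0
    calc (univ.filter fun r : Fin (n+1) → F => eval r P = 0).card * Fintype.card F
        ≤ (A.card * Fintype.card F + (Fintype.card F) ^ n * k) * Fintype.card F := by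
          gcongr
      _ = A.card * Fintype.card F * Fintype.card F + k * (Fintype.card F) ^ (n+1) := by ring
      _ ≤ Pk.totalDegree * (Fintype.card F) ^ n * Fintype.card F
            + k * (Fintype.card F) ^ (n+1) := by gcongr
      _ = (Pk.totalDegree + k) * (Fintype.card F) ^ (n+1) := by ring
      _ ≤ P.totalDegree * (Fintype.card F) ^ (n+1) := by gcongr

/-- Schwartz–Zippel lemma: if `P` is a nonzero `n`-variate polynomial of total
degree `d` over a finite field `F` and `r₁, …, rₙ` are chosen independently
and uniformly at random from `F`, then the probability that
`P(r₁,…,rₙ) = 0` is at most `d / |F|`. -/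
theorem schwartz_zippel {F : Type*} [Field F] [Fintype F] (n : ℕ)
    (P : MvPolynomial (Fin n) F) (hP : P ≠ 0) (d : ℕ)
    (hd : d = P.totalDegree) :
    ((Finset.univ.filter fun r : Fin n → F =>
        MvPolynomial.eval r P = 0).card : ℚ) / (Fintype.card F) ^ n
      ≤ (d : ℚ) / Fintype.card F := by
  have hF : (0 : ℚ) < Fintype.card F := by exact_mod_cast Fintype.card_pos
  have hFn : (0 : ℚ) < (Fintype.card F : ℚ) ^ n := pow_pos hF n
  rw [div_le_div_iff₀ hFn hF]
  have := sz_count n P hP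
  rw [← hd] at this
  calc ((univ.filter fun r : Fin n → F => eval r P = 0).card : ℚ) * Fintype.card F
      = (((univ.filter fun r : Fin n → F => eval r P = 0).card * Fintype.card F : ℕ) : ℚ) := by
        push_cast; ring
    _ ≤ ((d * (Fintype.card F) ^ n : ℕ) : ℚ) := by exact_mod_cast this
    _ = (d : ℚ) * (Fintype.card F : ℚ) ^ n := by push_cast; ring
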